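/- Let a ≤ 0 and h > 0 with h ≤ 1/|a| (no restriction if a = 0), and let b : ℝ × ℝ → ℝ be a nonnegative function. Let t_n = n h and let (y_n)_{n ≥ 0} satisfy, for n ≥ 1, the EAB₂ recursion y_{n+1} = e^{a h} y_n + h ( φ_1(a h) b_n + φ_2(a h)(b_n − b_{n−1}) ) with b_j = b(t_j, y_j). If moreover e^{a h} y_1 − h φ_2(a h) b_0 ≥ 0, then y_n ≥ 0 for all n ≥ 2. -/

import Mathlib

/-- The exponential propagation functions φ_j: φ_0(z) = e^z,
φ_{j+1}(z) = (φ_j(z) - 1/j!)/z for z ≠ 0, and φ_j(0) = 1/j!. -/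
noncomputable def phi : ℕ → ℝ → ℝ
  | 0, z => Real.exp z
  | j + 1, z =>
      if z = 0 then 1 / (Nat.factorial (j + 1)) else (phi j z - 1 / (Nat.factorial j)) / z



lemma phi1_eq (z : ℝ) (hz : z ≠ 0) : phi 1 z = (Real.exp z - 1) / z := by
  simp [phi, hz]

lemma phi2_eq (z : ℝ) (hz : z ≠ 0) : phi 2 z = ((Real.exp z - 1) / z - 1) / z := by
  simp [phi, hz]

lemma phi1_nonneg (z : ℝ) (hz0 : z ≤ 0) : 0 ≤ phi 1 z := by
  rcases eq_or_lt_of_le hz0 with h | h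
  · subst h; simp [phi]
  · rw [phi1_eq z h.ne]
    apply div_nonneg_iff.mpr
    right
    exact ⟨by nlinarith [Real.exp_le_one_iff.mpr hz0], h.le⟩

lemma phi2_nonneg (z : ℝ) (hz0 : z ≤ 0) : 0 ≤ phi 2 z := by
  rcases eq_or_lt_of_le hz0 with h | h
  · subst h; simp [phi]
  · rw [phi2_eq z h.ne]
    apply div_nonneg_iff.mpr
    right
    refine ⟨?_, h.le⟩
    rw [div_sub_one h.ne, div_nonpos_iff]
    left
    exact ⟨by nlinarith [Real.add_one_le_exp z], h.le⟩

lemma phi_key (z : ℝ) (hz1 : -1 ≤ z) (hz0 : z ≤ 0) :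
    phi 2 z ≤ Real.exp z * (phi 1 z + phi 2 z) := by
  rcases eq_or_lt_of_le hz0 with h | h
  · subst h; simp [phi]
  · have hzne : z ≠ 0 := h.ne
    rw [phi1_eq z hzne, phi2_eq z hzne]
    have hz2 : (0:ℝ) < z ^ 2 := by nlinarith
    have key : Real.exp z * ((Real.exp z - 1) / z + ((Real.exp z - 1) / z - 1) / z)
        - ((Real.exp z - 1) / z - 1) / z = (z + 1) * (Real.exp z - 1) ^ 2 / z ^ 2 := by
      field_simp
      ring
    nlinarith [div_nonneg (mul_nonneg (by linarith : (0:ℝ) ≤ z + 1)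
      (sq_nonneg (Real.exp z - 1))) hz2.le]

/-- Positivity of the EAB₂ scheme for y' = a y + b(t,y) with
a ≤ 0, b ≥ 0, under the step restriction h ≤ 1/|a| and a condition on the
initial data. -/
theorem eab2_positivity (a h : ℝ) (ha : a ≤ 0) (hh : 0 < h)
    (hstep : a ≠ 0 → h ≤ 1 / |a|)
    (b : ℝ → ℝ → ℝ) (hb : ∀ t y, 0 ≤ b t y)
    (y : ℕ → ℝ)
    (hrec : ∀ n, 1 ≤ n →
      y (n + 1) = Real.exp (a * h) * y n
        + h * (phi 1 (a * h) * b ((n : ℝ) * h) (y n)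
             + phi 2 (a * h) * (b ((n : ℝ) * h) (y n)
                 - b (((n - 1 : ℕ) : ℝ) * h) (y (n - 1)))))
    (hinit : 0 ≤ Real.exp (a * h) * y 1 - h * phi 2 (a * h) * b 0 (y 0)) :
    ∀ n, 2 ≤ n → 0 ≤ y n := by
  set z := a * h with hz
  have hz0 : z ≤ 0 := mul_nonpos_iff.mpr (Or.inr ⟨ha, hh.le⟩)
  have hz1 : -1 ≤ z := by
    rcases eq_or_lt_of_le ha with h0 | h0
    · rw [hz, h0]; norm_num
    · have hs := hstep h0.ne
      rw [abs_of_neg h0] at hs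
      have : h * (-a) ≤ 1 := by
        have hna : (0:ℝ) < -a := by linarith
        calc h * (-a) ≤ (1 / -a) * (-a) := by nlinarith
          _ = 1 := by field_simp; exact div_self h0.ne
      nlinarith
  have hE : (0:ℝ) < Real.exp z := Real.exp_pos z
  have hφ1 := phi1_nonneg z hz0
  have hφ2 := phi2_nonneg z hz0
  have hkey := phi_key z hz1 hz0
  -- the invariant
  have inv : ∀ n, 1 ≤ n →
      0 ≤ Real.exp z * y n - h * phi 2 z * b (((n - 1 : ℕ) : ℝ) * h) (y (n - 1)) := by
    intro n hn
    induction n with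
    | zero => omega
    | succ m ih =>
      rcases Nat.lt_or_ge m 1 with hm | hm
      · interval_cases m
        simpa using hinit
      · have ihm := ih hm
        have hr := hrec m hm
        simp only [Nat.add_sub_cancel]
        rw [hr]
        have hbm := hb ((m : ℝ) * h) (y m)
        nlinarith [mul_nonneg (hE.le) ihm,
          mul_nonneg (mul_nonneg hh.le hbm) (sub_nonneg.mpr hkey)]
  intro n hn
  obtain ⟨m, rfl⟩ : ∃ m, n = m + 1 := ⟨n - 1, by omega⟩
  have hm : 1 ≤ m := by omega
  have hr := hrec m hm
  have ihm := inv m hm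
  have hbm := hb ((m : ℝ) * h) (y m)
  rw [hr]
  nlinarith [mul_nonneg (mul_nonneg hh.le hbm) (add_nonneg hφ1 hφ2)]
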